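/- Let X be a real vector space equipped with an inner product ⟨·,·⟩₀ (with induced norm ‖·‖₀), a norm ‖·‖₁, and a seminorm n₋ satisfying n₋(x) ≤ ‖x‖₀ for all x ∈ X. Let C_inv, H, 𝒯 > 0 and let μ₁, …, μ_N ∈ X be a nonzero tuple satisfying the inverse inequality ‖μ_j‖₁ ≤ C_inv·H⁻¹·‖μ_j‖₀ for each j. For j = 1, …, N let η_j : ℝ → ℝ be the hat function η_j(t) = t/𝒯 − j + 1 for t ∈ [(j−1)𝒯, j𝒯], η_j(t) = j + 1 − t/𝒯 for t ∈ (j𝒯, (j+1)𝒯], zero otherwise, and let g_j be its a.e. derivative g_j(t) = 1/𝒯 on [(j−1)𝒯, j𝒯], −1/𝒯 on (j𝒯, (j+1)𝒯], zero otherwise. Set v(t) = Σ_j μ_j·η_j(t) and v'(t) = Σ_j μ_j·g_j(t). Then Σ_j ‖μ_j‖₀² ≥ γ · (∫₀^{N𝒯} [n₋(v'(t))² + ‖v(t)‖₁²] dt)^{1/2} · (Σ_j ‖μ_j‖₁²)^{1/2}, where γ = (√(2𝒯)·C_inv²·H⁻² + 2·𝒯^{−1/2}·C_inv·H⁻¹)⁻¹.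 -/

import Mathlib

/-- The hat function η_j on the uniform temporal grid with step 𝒯. -/
noncomputable def hatFun (𝒯 : ℝ) (j : ℝ) (t : ℝ) : ℝ :=
  if t ∈ Set.Icc ((j - 1) * 𝒯) (j * 𝒯) then t / 𝒯 - j + 1
  else if t ∈ Set.Ioc (j * 𝒯) ((j + 1) * 𝒯) then j + 1 - t / 𝒯
  else 0

/-- The a.e. derivative g_j of the hat function η_j. -/
noncomputable def hatDeriv (𝒯 : ℝ) (j : ℝ) (t : ℝ) : ℝ :=
  if t ∈ Set.Icc ((j - 1) * 𝒯) (j * 𝒯) then 1 / 𝒯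
  else if t ∈ Set.Ioc (j * 𝒯) ((j + 1) * 𝒯) then -1 / 𝒯
  else 0


open MeasureTheory Set Finset


lemma hat_le (𝒯 : ℝ) (h𝒯 : 0 < 𝒯) (n : ℤ) (t : ℝ) :
    hatFun 𝒯 (n : ℝ) t ≤
      (if n = ⌊t / 𝒯⌋ then 1 - Int.fract (t / 𝒯) else 0) +
      (if n = ⌊t / 𝒯⌋ + 1 then Int.fract (t / 𝒯) else 0) := by
  have hfr := Int.fract_nonneg (t / 𝒯)
  have hfr1 := Int.fract_lt_one (t / 𝒯)
  have hrhs : (0:ℝ) ≤ (if n = ⌊t / 𝒯⌋ then 1 - Int.fract (t / 𝒯) else 0) +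
      (if n = ⌊t / 𝒯⌋ + 1 then Int.fract (t / 𝒯) else 0) := by
    apply add_nonneg <;> split_ifs <;> linarith
  unfold hatFun
  by_cases hb1 : t ∈ Set.Icc (((n:ℝ) - 1) * 𝒯) ((n:ℝ) * 𝒯)
  · rw [if_pos hb1]
    obtain ⟨ha, hb⟩ := hb1
    have hxl : (n:ℝ) - 1 ≤ t / 𝒯 := (le_div_iff₀ h𝒯).2 ha
    have hxr : t / 𝒯 ≤ (n:ℝ) := (div_le_iff₀ h𝒯).2 hb
    rcases eq_or_lt_of_le hxr with heq | hlt
    · have hfl : ⌊t/𝒯⌋ = n := by rw [heq]; exact Int.floor_intCast n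
      have hfr0 : Int.fract (t/𝒯) = 0 := by rw [heq]; exact Int.fract_intCast n
      rw [if_pos hfl.symm, if_neg (by omega)]
      linarith
    · have hfl : ⌊t/𝒯⌋ = n - 1 := by
        rw [Int.floor_eq_iff]
        constructor <;> push_cast <;> linarith
      have hfr2 : Int.fract (t/𝒯) = t/𝒯 - ((n:ℝ) - 1) := by
        rw [Int.fract, hfl]; push_cast; ring
      rw [if_neg (by omega), if_pos (by omega)]
      linarith
  · rw [if_neg hb1]
    by_cases hb2 : t ∈ Set.Ioc ((n:ℝ) * 𝒯) (((n:ℝ) + 1) * 𝒯)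
    · rw [if_pos hb2]
      obtain ⟨ha, hb⟩ := hb2
      have hxl : (n:ℝ) < t / 𝒯 := (lt_div_iff₀ h𝒯).2 ha
      have hxr : t / 𝒯 ≤ (n:ℝ) + 1 := (div_le_iff₀ h𝒯).2 hb
      rcases eq_or_lt_of_le hxr with heq | hlt
      · linarith
      · have hfl : ⌊t/𝒯⌋ = n := by
          rw [Int.floor_eq_iff]
          constructor <;> push_cast <;> linarith
        have hfr2 : Int.fract (t/𝒯) = t/𝒯 - (n:ℝ) := by
          rw [Int.fract, hfl]
        rw [if_pos hfl.symm, if_neg (by omega)]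
        linarith
    · rw [if_neg hb2]
      exact hrhs

lemma sum_ite_int_le {N : ℕ} (m : ℤ) (A : ℝ) (hA : 0 ≤ A) (f : Fin N → ℤ)
    (hf : Function.Injective f) :
    ∑ j : Fin N, (if f j = m then A else 0) ≤ A := by
  classical
  rw [Finset.sum_ite, Finset.sum_const, Finset.sum_const_zero, add_zero]
  have hcard : (Finset.univ.filter (fun j => f j = m)).card ≤ 1 := by
    apply Finset.card_le_one.2
    intro a ha b hb
    exact hf ((Finset.mem_filter.1 ha).2.trans (Finset.mem_filter.1 hb).2.symm)
  have hc : ((Finset.univ.filter (fun j => f j = m)).card : ℝ) ≤ 1 := by exact_mod_cast hcard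
  rw [nsmul_eq_mul]
  nlinarith

lemma hat_sum_le (𝒯 : ℝ) (h𝒯 : 0 < 𝒯) (N : ℕ) (t : ℝ) :
    ∑ j : Fin N, hatFun 𝒯 ((j.val : ℝ) + 1) t ≤ 1 := by
  have hfr := Int.fract_nonneg (t / 𝒯)
  have hfr1 := Int.fract_lt_one (t / 𝒯)
  have key : ∀ j : Fin N, hatFun 𝒯 ((j.val : ℝ) + 1) t ≤
      (if (j.val : ℤ) + 1 = ⌊t/𝒯⌋ then 1 - Int.fract (t/𝒯) else 0) +
      (if (j.val : ℤ) + 1 = ⌊t/𝒯⌋ + 1 then Int.fract (t/𝒯) else 0) := by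
    intro j
    have h := hat_le 𝒯 h𝒯 ((j.val : ℤ) + 1) t
    push_cast at h
    exact h
  calc ∑ j : Fin N, hatFun 𝒯 ((j.val : ℝ) + 1) t
      ≤ ∑ j : Fin N, ((if (j.val : ℤ) + 1 = ⌊t/𝒯⌋ then 1 - Int.fract (t/𝒯) else 0) +
        (if (j.val : ℤ) + 1 = ⌊t/𝒯⌋ + 1 then Int.fract (t/𝒯) else 0)) :=
        Finset.sum_le_sum fun j _ => key j
    _ = (∑ j : Fin N, (if (j.val : ℤ) + 1 = ⌊t/𝒯⌋ then 1 - Int.fract (t/𝒯) else 0)) +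
        (∑ j : Fin N, (if (j.val : ℤ) + 1 = ⌊t/𝒯⌋ + 1 then Int.fract (t/𝒯) else 0)) :=
        Finset.sum_add_distrib
    _ ≤ (1 - Int.fract (t/𝒯)) + Int.fract (t/𝒯) := by
        apply add_le_add
        · exact sum_ite_int_le _ _ (by linarith) _
            (fun a b h => Fin.ext (by omega))
        · exact sum_ite_int_le _ _ (by linarith) _
            (fun a b h => Fin.ext (by omega))
    _ = 1 := by ring

lemma chi_le (𝒯 : ℝ) (h𝒯 : 0 < 𝒯) (n : ℤ) (t : ℝ) (hbad : Int.fract (t/𝒯) ≠ 0) :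
    (if t ∈ Set.Icc ((n:ℝ) * 𝒯) (((n:ℝ) + 2) * 𝒯) then (1:ℝ) else 0) ≤
      (if n = ⌊t/𝒯⌋ - 1 then (1:ℝ) else 0) + (if n = ⌊t/𝒯⌋ then (1:ℝ) else 0) := by
  split_ifs with h1 h2 h3 h2 h3 <;> try norm_num
  · exfalso
    obtain ⟨ha, hb⟩ := h1
    have hxl : (n:ℝ) ≤ t / 𝒯 := (le_div_iff₀ h𝒯).2 ha
    have hxr : t / 𝒯 ≤ (n:ℝ) + 2 := (div_le_iff₀ h𝒯).2 hb
    have hne : t / 𝒯 ≠ (n:ℝ) + 2 := by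
      intro he
      apply hbad
      rw [he]
      have h2 : ((n:ℝ) + 2) = ((n + 2 : ℤ) : ℝ) := by push_cast; ring
      rw [h2, Int.fract_intCast]
    have hlt : t / 𝒯 < (n:ℝ) + 2 := lt_of_le_of_ne hxr hne
    have h1' : n ≤ ⌊t/𝒯⌋ := Int.le_floor.2 hxl
    have h2' : ⌊t/𝒯⌋ ≤ n + 1 := by
      have hf := Int.floor_le (t/𝒯)
      have hlt2 : ((⌊t/𝒯⌋:ℤ) : ℝ) < ((n + 2 : ℤ) : ℝ) := by push_cast; linarith
      have := Int.cast_lt.1 hlt2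
      omega
    omega


lemma chi_sum_le (𝒯 : ℝ) (h𝒯 : 0 < 𝒯) (N : ℕ) (t : ℝ) (hbad : Int.fract (t/𝒯) ≠ 0) :
    ∑ j : Fin N, (if t ∈ Set.Icc ((j.val:ℝ) * 𝒯) (((j.val:ℝ) + 2) * 𝒯) then (1:ℝ) else 0)
      ≤ 2 := by
  have key : ∀ j : Fin N,
      (if t ∈ Set.Icc ((j.val:ℝ) * 𝒯) (((j.val:ℝ) + 2) * 𝒯) then (1:ℝ) else 0) ≤
      (if (j.val : ℤ) = ⌊t/𝒯⌋ - 1 then (1:ℝ) else 0) +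
      (if (j.val : ℤ) = ⌊t/𝒯⌋ then (1:ℝ) else 0) := by
    intro j
    have h := chi_le 𝒯 h𝒯 (j.val : ℤ) t hbad
    push_cast at h
    exact h
  calc ∑ j : Fin N, (if t ∈ Set.Icc ((j.val:ℝ) * 𝒯) (((j.val:ℝ) + 2) * 𝒯) then (1:ℝ) else 0)
      ≤ ∑ j : Fin N, ((if (j.val : ℤ) = ⌊t/𝒯⌋ - 1 then (1:ℝ) else 0) +
        (if (j.val : ℤ) = ⌊t/𝒯⌋ then (1:ℝ) else 0)) := Finset.sum_le_sum fun j _ => key j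
    _ = (∑ j : Fin N, (if (j.val : ℤ) = ⌊t/𝒯⌋ - 1 then (1:ℝ) else 0)) +
        (∑ j : Fin N, (if (j.val : ℤ) = ⌊t/𝒯⌋ then (1:ℝ) else 0)) := Finset.sum_add_distrib
    _ ≤ 1 + 1 := by
        apply add_le_add
        · exact sum_ite_int_le _ _ (by norm_num) _ (fun a b h => Fin.ext (by omega))
        · exact sum_ite_int_le _ _ (by norm_num) _ (fun a b h => Fin.ext (by omega))
    _ = 2 := by norm_num

lemma hatFun_nonneg (𝒯 : ℝ) (h𝒯 : 0 < 𝒯) (c t : ℝ) : 0 ≤ hatFun 𝒯 c t := by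
  unfold hatFun
  split_ifs with h1 h2
  · obtain ⟨ha, hb⟩ := h1
    have := (le_div_iff₀ h𝒯).2 ha
    linarith
  · obtain ⟨ha, hb⟩ := h2
    have := (div_le_iff₀ h𝒯).2 hb
    linarith
  · exact le_refl _

lemma hatFun_le_chi (𝒯 : ℝ) (h𝒯 : 0 < 𝒯) (c t : ℝ) :
    hatFun 𝒯 c t ≤ (if t ∈ Set.Icc ((c - 1) * 𝒯) ((c + 1) * 𝒯) then (1:ℝ) else 0) := by
  unfold hatFun
  by_cases h1 : t ∈ Set.Icc ((c - 1) * 𝒯) (c * 𝒯)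
  · rw [if_pos h1]
    obtain ⟨ha, hb⟩ := h1
    rw [if_pos ⟨ha, by nlinarith⟩]
    have := (div_le_iff₀ h𝒯).2 hb
    linarith
  · rw [if_neg h1]
    by_cases h2 : t ∈ Set.Ioc (c * 𝒯) ((c + 1) * 𝒯)
    · rw [if_pos h2]
      obtain ⟨ha, hb⟩ := h2
      rw [if_pos ⟨by nlinarith, hb⟩]
      have := (lt_div_iff₀ h𝒯).2 ha
      linarith
    · rw [if_neg h2]
      split_ifs <;> norm_num

lemma hatDeriv_abs_le (𝒯 : ℝ) (h𝒯 : 0 < 𝒯) (c t : ℝ) :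
    |hatDeriv 𝒯 c t| ≤
      𝒯⁻¹ * (if t ∈ Set.Icc ((c - 1) * 𝒯) ((c + 1) * 𝒯) then (1:ℝ) else 0) := by
  have habs : |1 / 𝒯| = 𝒯⁻¹ := by
    rw [abs_of_pos (by positivity)]; rw [one_div]
  unfold hatDeriv
  by_cases h1 : t ∈ Set.Icc ((c - 1) * 𝒯) (c * 𝒯)
  · rw [if_pos h1]
    obtain ⟨ha, hb⟩ := h1
    rw [if_pos ⟨ha, by nlinarith⟩, habs, mul_one]
  · rw [if_neg h1]
    by_cases h2 : t ∈ Set.Ioc (c * 𝒯) ((c + 1) * 𝒯)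
    · rw [if_pos h2]
      obtain ⟨ha, hb⟩ := h2
      rw [if_pos ⟨by nlinarith, hb⟩, mul_one, abs_div, abs_neg, abs_one,
        abs_of_pos h𝒯, one_div]
    · rw [if_neg h2]
      split_ifs <;> simp [abs_of_nonneg] <;> positivity

lemma my_sqrt_add_le (a b : ℝ) (ha : 0 ≤ a) (hb : 0 ≤ b) :
    Real.sqrt (a + b) ≤ Real.sqrt a + Real.sqrt b := by
  have h : a + b ≤ (Real.sqrt a + Real.sqrt b) ^ 2 := by
    have ha' := Real.sq_sqrt ha; have hb' := Real.sq_sqrt hb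
    nlinarith [mul_nonneg (Real.sqrt_nonneg a) (Real.sqrt_nonneg b)]
  calc Real.sqrt (a + b) ≤ Real.sqrt ((Real.sqrt a + Real.sqrt b) ^ 2) := Real.sqrt_le_sqrt h
    _ = Real.sqrt a + Real.sqrt b := Real.sqrt_sq (by positivity)

lemma my_psum_le {ι X : Type*} [AddCommGroup X] (p : X → ℝ) (h0 : p 0 = 0)
    (hadd : ∀ x y, p (x + y) ≤ p x + p y) (s : Finset ι) (f : ι → X) :
    p (∑ i ∈ s, f i) ≤ ∑ i ∈ s, p (f i) := by
  classical
  induction s using Finset.induction with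
  | empty => simp [h0]
  | insert a s hx ih =>
    rw [Finset.sum_insert hx, Finset.sum_insert hx]
    exact le_trans (hadd _ _) (by linarith)

lemma pointwise_bound {X : Type*} [NormedAddCommGroup X] [Module ℝ X]
    (n1 nneg : X → ℝ)
    (hn1_nonneg : ∀ x : X, 0 ≤ n1 x)
    (hn1_smul : ∀ (a : ℝ) (x : X), n1 (a • x) = |a| * n1 x)
    (hn1_add : ∀ x y : X, n1 (x + y) ≤ n1 x + n1 y)
    (hnneg_nonneg : ∀ x : X, 0 ≤ nneg x)
    (hnneg_smul : ∀ (a : ℝ) (x : X), nneg (a • x) = |a| * nneg x)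
    (hnneg_add : ∀ x y : X, nneg (x + y) ≤ nneg x + nneg y)
    (hnneg_le : ∀ x : X, nneg x ≤ ‖x‖)
    (𝒯 : ℝ) (h𝒯 : 0 < 𝒯) (N : ℕ) (μ : Fin N → X) (t : ℝ)
    (hbad : Int.fract (t/𝒯) ≠ 0) :
    (nneg (∑ j : Fin N, hatDeriv 𝒯 ((j.val : ℝ) + 1) t • μ j)) ^ 2 +
      (n1 (∑ j : Fin N, hatFun 𝒯 ((j.val : ℝ) + 1) t • μ j)) ^ 2 ≤
    ∑ j : Fin N, (if t ∈ Set.Icc ((j.val:ℝ) * 𝒯) (((j.val:ℝ) + 2) * 𝒯) then (1:ℝ) else 0) *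
      (2 * (𝒯⁻¹)^2 * ‖μ j‖^2 + (n1 (μ j))^2) := by
  classical
  set χ : Fin N → ℝ := fun j =>
    if t ∈ Set.Icc ((j.val:ℝ) * 𝒯) (((j.val:ℝ) + 2) * 𝒯) then (1:ℝ) else 0 with hχdef
  have hχ_nonneg : ∀ j, 0 ≤ χ j := fun j => by rw [hχdef]; dsimp; split_ifs <;> norm_num
  have hχ_sq : ∀ j, (χ j) ^ 2 = χ j := fun j => by rw [hχdef]; dsimp; split_ifs <;> norm_num
  have hχ_sum : ∑ j, χ j ≤ 2 := chi_sum_le 𝒯 h𝒯 N t hbad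
  have hIccEq : ∀ j : Fin N,
      Set.Icc (((j.val:ℝ) + 1 - 1) * 𝒯) (((j.val:ℝ) + 1 + 1) * 𝒯) =
      Set.Icc ((j.val:ℝ) * 𝒯) (((j.val:ℝ) + 2) * 𝒯) := by
    intro j
    rw [show ((j.val:ℝ) + 1 - 1) = (j.val:ℝ) by ring,
      show ((j.val:ℝ) + 1 + 1) = ((j.val:ℝ) + 2) by ring]
  have hhat_le : ∀ j : Fin N, hatFun 𝒯 ((j.val:ℝ) + 1) t ≤ χ j := by
    intro j
    have h := hatFun_le_chi 𝒯 h𝒯 ((j.val:ℝ) + 1) t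
    simpa only [hIccEq j] using h
  have hhat_nonneg : ∀ j : Fin N, 0 ≤ hatFun 𝒯 ((j.val:ℝ) + 1) t :=
    fun j => hatFun_nonneg 𝒯 h𝒯 _ t
  have hderiv_le : ∀ j : Fin N, |hatDeriv 𝒯 ((j.val:ℝ) + 1) t| ≤ 𝒯⁻¹ * χ j := by
    intro j
    have h := hatDeriv_abs_le 𝒯 h𝒯 ((j.val:ℝ) + 1) t
    simpa only [hIccEq j] using h
  have hn10 : n1 (0 : X) = 0 := by
    have h := hn1_smul 0 0
    simpa using h
  have hnneg0 : nneg (0 : X) = 0 := by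
    have h := hnneg_smul 0 0
    simpa using h
  -- n1 part
  have hA : n1 (∑ j : Fin N, hatFun 𝒯 ((j.val : ℝ) + 1) t • μ j) ≤
      ∑ j : Fin N, hatFun 𝒯 ((j.val:ℝ) + 1) t * n1 (μ j) := by
    refine le_trans (my_psum_le n1 hn10 hn1_add _ _) (Finset.sum_le_sum fun j _ => ?_)
    rw [hn1_smul, abs_of_nonneg (hhat_nonneg j)]
  have hA2 : (∑ j : Fin N, hatFun 𝒯 ((j.val:ℝ) + 1) t * n1 (μ j)) ^ 2 ≤
      (∑ j : Fin N, hatFun 𝒯 ((j.val:ℝ) + 1) t) *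
        ∑ j : Fin N, hatFun 𝒯 ((j.val:ℝ) + 1) t * (n1 (μ j)) ^ 2 := by
    have h := Finset.sum_mul_sq_le_sq_mul_sq Finset.univ
      (fun j : Fin N => Real.sqrt (hatFun 𝒯 ((j.val:ℝ) + 1) t))
      (fun j : Fin N => Real.sqrt (hatFun 𝒯 ((j.val:ℝ) + 1) t) * n1 (μ j))
    have e1 : ∀ j : Fin N, Real.sqrt (hatFun 𝒯 ((j.val:ℝ) + 1) t) *
        (Real.sqrt (hatFun 𝒯 ((j.val:ℝ) + 1) t) * n1 (μ j)) =
        hatFun 𝒯 ((j.val:ℝ) + 1) t * n1 (μ j) := by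
      intro j
      rw [← mul_assoc, Real.mul_self_sqrt (hhat_nonneg j)]
    have e2 : ∀ j : Fin N, (Real.sqrt (hatFun 𝒯 ((j.val:ℝ) + 1) t)) ^ 2 =
        hatFun 𝒯 ((j.val:ℝ) + 1) t := fun j => Real.sq_sqrt (hhat_nonneg j)
    have e3 : ∀ j : Fin N, (Real.sqrt (hatFun 𝒯 ((j.val:ℝ) + 1) t) * n1 (μ j)) ^ 2 =
        hatFun 𝒯 ((j.val:ℝ) + 1) t * (n1 (μ j)) ^ 2 := by
      intro j
      rw [mul_pow, Real.sq_sqrt (hhat_nonneg j)]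
    rw [Finset.sum_congr rfl fun j _ => e1 j, Finset.sum_congr rfl fun j _ => e2 j,
      Finset.sum_congr rfl fun j _ => e3 j] at h
    exact h
  have hApart : (n1 (∑ j : Fin N, hatFun 𝒯 ((j.val : ℝ) + 1) t • μ j)) ^ 2 ≤
      ∑ j : Fin N, χ j * (n1 (μ j)) ^ 2 := by
    calc (n1 (∑ j : Fin N, hatFun 𝒯 ((j.val : ℝ) + 1) t • μ j)) ^ 2
        ≤ (∑ j : Fin N, hatFun 𝒯 ((j.val:ℝ) + 1) t * n1 (μ j)) ^ 2 :=
          pow_le_pow_left₀ (hn1_nonneg _) hA 2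
      _ ≤ (∑ j : Fin N, hatFun 𝒯 ((j.val:ℝ) + 1) t) *
            ∑ j : Fin N, hatFun 𝒯 ((j.val:ℝ) + 1) t * (n1 (μ j)) ^ 2 := hA2
      _ ≤ 1 * ∑ j : Fin N, hatFun 𝒯 ((j.val:ℝ) + 1) t * (n1 (μ j)) ^ 2 := by
          apply mul_le_mul_of_nonneg_right (hat_sum_le 𝒯 h𝒯 N t)
          exact Finset.sum_nonneg fun j _ => mul_nonneg (hhat_nonneg j) (sq_nonneg _)
      _ = ∑ j : Fin N, hatFun 𝒯 ((j.val:ℝ) + 1) t * (n1 (μ j)) ^ 2 := one_mul _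
      _ ≤ ∑ j : Fin N, χ j * (n1 (μ j)) ^ 2 :=
          Finset.sum_le_sum fun j _ =>
            mul_le_mul_of_nonneg_right (hhat_le j) (sq_nonneg _)
  -- nneg part
  have hB : nneg (∑ j : Fin N, hatDeriv 𝒯 ((j.val : ℝ) + 1) t • μ j) ≤
      ∑ j : Fin N, χ j * (𝒯⁻¹ * ‖μ j‖) := by
    refine le_trans (my_psum_le nneg hnneg0 hnneg_add _ _) (Finset.sum_le_sum fun j _ => ?_)
    rw [hnneg_smul]
    calc |hatDeriv 𝒯 ((j.val:ℝ) + 1) t| * nneg (μ j)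
        ≤ |hatDeriv 𝒯 ((j.val:ℝ) + 1) t| * ‖μ j‖ :=
          mul_le_mul_of_nonneg_left (hnneg_le _) (abs_nonneg _)
      _ ≤ (𝒯⁻¹ * χ j) * ‖μ j‖ :=
          mul_le_mul_of_nonneg_right (hderiv_le j) (norm_nonneg _)
      _ = χ j * (𝒯⁻¹ * ‖μ j‖) := by ring
  have hB2 : (∑ j : Fin N, χ j * (𝒯⁻¹ * ‖μ j‖)) ^ 2 ≤
      (∑ j : Fin N, χ j) * ∑ j : Fin N, χ j * ((𝒯⁻¹)^2 * ‖μ j‖^2) := by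
    have h := Finset.sum_mul_sq_le_sq_mul_sq Finset.univ
      (fun j : Fin N => χ j)
      (fun j : Fin N => χ j * (𝒯⁻¹ * ‖μ j‖))
    have e1 : ∀ j : Fin N, χ j * (χ j * (𝒯⁻¹ * ‖μ j‖)) = χ j * (𝒯⁻¹ * ‖μ j‖) := by
      intro j
      rw [← mul_assoc, ← pow_two, hχ_sq j]
    have e3 : ∀ j : Fin N, (χ j * (𝒯⁻¹ * ‖μ j‖)) ^ 2 = χ j * ((𝒯⁻¹)^2 * ‖μ j‖^2) := by
      intro j
      have h2 := hχ_sq j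
      rw [mul_pow]
      rw [h2]
      ring
    rw [Finset.sum_congr rfl fun j _ => e1 j, Finset.sum_congr rfl fun j _ => hχ_sq j,
      Finset.sum_congr rfl fun j _ => e3 j] at h
    exact h
  have hBpart : (nneg (∑ j : Fin N, hatDeriv 𝒯 ((j.val : ℝ) + 1) t • μ j)) ^ 2 ≤
      2 * ∑ j : Fin N, χ j * ((𝒯⁻¹)^2 * ‖μ j‖^2) := by
    calc (nneg (∑ j : Fin N, hatDeriv 𝒯 ((j.val : ℝ) + 1) t • μ j)) ^ 2
        ≤ (∑ j : Fin N, χ j * (𝒯⁻¹ * ‖μ j‖)) ^ 2 := pow_le_pow_left₀ (hnneg_nonneg _) hB 2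
      _ ≤ (∑ j : Fin N, χ j) * ∑ j : Fin N, χ j * ((𝒯⁻¹)^2 * ‖μ j‖^2) := hB2
      _ ≤ 2 * ∑ j : Fin N, χ j * ((𝒯⁻¹)^2 * ‖μ j‖^2) := by
          apply mul_le_mul_of_nonneg_right hχ_sum
          exact Finset.sum_nonneg fun j _ => mul_nonneg (hχ_nonneg j) (by positivity)
  calc (nneg (∑ j : Fin N, hatDeriv 𝒯 ((j.val : ℝ) + 1) t • μ j)) ^ 2 +
      (n1 (∑ j : Fin N, hatFun 𝒯 ((j.val : ℝ) + 1) t • μ j)) ^ 2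
      ≤ 2 * (∑ j : Fin N, χ j * ((𝒯⁻¹)^2 * ‖μ j‖^2)) + ∑ j : Fin N, χ j * (n1 (μ j)) ^ 2 :=
        add_le_add hBpart hApart
    _ = ∑ j : Fin N, χ j * (2 * (𝒯⁻¹)^2 * ‖μ j‖^2 + (n1 (μ j))^2) := by
        rw [Finset.mul_sum, ← Finset.sum_add_distrib]
        exact Finset.sum_congr rfl fun j _ => by ring

/-- Quantified version of the inf-sup condition (infsupC) for the terminal-time
constraint forms, from the proof of Lemma 3.3 in Ljung–Maier–Målqvist, "A
Space-Time Multiscale Method for Parabolic Problems". -/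
theorem infsup_terminal_constraint
    {X : Type*} [NormedAddCommGroup X] [InnerProductSpace ℝ X]
    (n1 nneg : X → ℝ)
    (hn1_nonneg : ∀ x : X, 0 ≤ n1 x)
    (hn1_smul : ∀ (a : ℝ) (x : X), n1 (a • x) = |a| * n1 x)
    (hn1_add : ∀ x y : X, n1 (x + y) ≤ n1 x + n1 y)
    (hn1_def : ∀ x : X, n1 x = 0 → x = 0)
    (hnneg_nonneg : ∀ x : X, 0 ≤ nneg x)
    (hnneg_smul : ∀ (a : ℝ) (x : X), nneg (a • x) = |a| * nneg x)
    (hnneg_add : ∀ x y : X, nneg (x + y) ≤ nneg x + nneg y)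
    (hnneg_le : ∀ x : X, nneg x ≤ ‖x‖)
    (Cinv Hp 𝒯 : ℝ) (hCinv : 0 < Cinv) (hHp : 0 < Hp) (h𝒯 : 0 < 𝒯)
    (N : ℕ) (μ : Fin N → X) (hμ_ne : μ ≠ 0)
    (hinv : ∀ j, n1 (μ j) ≤ Cinv * Hp⁻¹ * ‖μ j‖) :
    (Real.sqrt (2 * 𝒯) * Cinv ^ 2 * (Hp ^ 2)⁻¹ +
        2 * (Real.sqrt 𝒯)⁻¹ * Cinv * Hp⁻¹)⁻¹ *
      Real.sqrt (∫ t in Set.Ioc (0 : ℝ) (N * 𝒯),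
        ((nneg (∑ j : Fin N, hatDeriv 𝒯 ((j.val : ℝ) + 1) t • μ j)) ^ 2 +
          (n1 (∑ j : Fin N, hatFun 𝒯 ((j.val : ℝ) + 1) t • μ j)) ^ 2)) *
      Real.sqrt (∑ j, (n1 (μ j)) ^ 2) ≤
    ∑ j, ‖μ j‖ ^ 2 := by
  classical
  set S0 := ∑ j, ‖μ j‖ ^ 2 with hS0def
  set S1 := ∑ j, (n1 (μ j)) ^ 2 with hS1def
  have hS0 : (0:ℝ) ≤ S0 := Finset.sum_nonneg fun j _ => sq_nonneg _
  have hS1 : (0:ℝ) ≤ S1 := Finset.sum_nonneg fun j _ => sq_nonneg _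
  have hsq𝒯 : 0 < Real.sqrt 𝒯 := Real.sqrt_pos.2 h𝒯
  have hsq2𝒯 : 0 < Real.sqrt (2*𝒯) := Real.sqrt_pos.2 (by linarith)
  have hK : 0 < Real.sqrt (2 * 𝒯) * Cinv ^ 2 * (Hp ^ 2)⁻¹ +
      2 * (Real.sqrt 𝒯)⁻¹ * Cinv * Hp⁻¹ := by positivity
  rw [mul_assoc, inv_mul_le_iff₀ hK]
  -- the dominating coefficients
  set c : Fin N → ℝ := fun j => 2 * (𝒯⁻¹)^2 * ‖μ j‖^2 + (n1 (μ j))^2 with hcdef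
  have hc : ∀ j, 0 ≤ c j := fun j => by positivity
  -- integrability of the dominating function
  have hGint1 : ∀ j : Fin N, MeasureTheory.Integrable
      (fun t => Set.indicator (Set.Icc ((j.val:ℝ) * 𝒯) (((j.val:ℝ) + 2) * 𝒯))
        (fun _ => c j) t)
      (MeasureTheory.volume.restrict (Set.Ioc (0:ℝ) (N*𝒯))) := by
    intro j
    apply MeasureTheory.Integrable.restrict
    rw [MeasureTheory.integrable_indicator_iff measurableSet_Icc]
    exact MeasureTheory.integrableOn_const measure_Icc_lt_top.ne
  -- the bad set has measure zero
  have hbad0 : MeasureTheory.volume {t : ℝ | Int.fract (t/𝒯) = 0} = 0 := by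
    have hsub : {t : ℝ | Int.fract (t/𝒯) = 0} ⊆ Set.range (fun k : ℤ => (k:ℝ) * 𝒯) := by
      intro t ht
      simp only [Set.mem_setOf_eq] at ht
      have hfl : ((⌊t/𝒯⌋ : ℤ) : ℝ) = t/𝒯 := by
        rw [Int.fract] at ht
        linarith
      refine ⟨⌊t/𝒯⌋, ?_⟩
      show ((⌊t/𝒯⌋ : ℤ) : ℝ) * 𝒯 = t
      rw [hfl, div_mul_cancel₀ t (ne_of_gt h𝒯)]
    exact measure_mono_null hsub ((Set.countable_range _).measure_zero _)
  have hae : ∀ᵐ t ∂(MeasureTheory.volume.restrict (Set.Ioc (0:ℝ) (N*𝒯))),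
      Int.fract (t/𝒯) ≠ 0 := by
    apply MeasureTheory.ae_restrict_of_ae
    rw [MeasureTheory.ae_iff]
    have heq : {t : ℝ | ¬ Int.fract (t/𝒯) ≠ 0} = {t : ℝ | Int.fract (t/𝒯) = 0} := by
      simp [not_not]
    rw [heq]
    exact hbad0
  -- integral bound
  have hI : (∫ t in Set.Ioc (0 : ℝ) (N * 𝒯),
      ((nneg (∑ j : Fin N, hatDeriv 𝒯 ((j.val : ℝ) + 1) t • μ j)) ^ 2 +
        (n1 (∑ j : Fin N, hatFun 𝒯 ((j.val : ℝ) + 1) t • μ j)) ^ 2)) ≤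
      4 * 𝒯⁻¹ * S0 + 2 * 𝒯 * S1 := by
    have hmono : (∫ t in Set.Ioc (0 : ℝ) (N * 𝒯),
        ((nneg (∑ j : Fin N, hatDeriv 𝒯 ((j.val : ℝ) + 1) t • μ j)) ^ 2 +
          (n1 (∑ j : Fin N, hatFun 𝒯 ((j.val : ℝ) + 1) t • μ j)) ^ 2)) ≤
        ∫ t in Set.Ioc (0 : ℝ) (N * 𝒯), (∑ j : Fin N,
          Set.indicator (Set.Icc ((j.val:ℝ) * 𝒯) (((j.val:ℝ) + 2) * 𝒯))
            (fun _ => c j) t) := by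
      apply MeasureTheory.integral_mono_of_nonneg
      · exact Filter.Eventually.of_forall fun t => by positivity
      · exact MeasureTheory.integrable_finset_sum _ fun j _ => hGint1 j
      · refine hae.mono fun t ht => ?_
        have h := pointwise_bound n1 nneg hn1_nonneg hn1_smul hn1_add hnneg_nonneg
          hnneg_smul hnneg_add hnneg_le 𝒯 h𝒯 N μ t ht
        refine le_trans h (le_of_eq (Finset.sum_congr rfl fun j _ => ?_))
        rw [Set.indicator_apply]
        split_ifs
        · rw [one_mul]
        · rw [zero_mul]
    have hGcalc : (∫ t in Set.Ioc (0 : ℝ) (N * 𝒯), (∑ j : Fin N,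
        Set.indicator (Set.Icc ((j.val:ℝ) * 𝒯) (((j.val:ℝ) + 2) * 𝒯))
          (fun _ => c j) t)) ≤ ∑ j : Fin N, 2 * 𝒯 * c j := by
      rw [MeasureTheory.integral_finset_sum _ fun j _ => hGint1 j]
      apply Finset.sum_le_sum
      intro j _
      rw [MeasureTheory.integral_indicator measurableSet_Icc,
        MeasureTheory.Measure.restrict_restrict measurableSet_Icc,
        MeasureTheory.setIntegral_const, smul_eq_mul]
      have hv : (MeasureTheory.volume (Set.Icc ((j.val:ℝ) * 𝒯) (((j.val:ℝ) + 2) * 𝒯) ∩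
          Set.Ioc (0:ℝ) (N*𝒯))).toReal ≤ 2 * 𝒯 := by
        have h1 : MeasureTheory.volume (Set.Icc ((j.val:ℝ) * 𝒯) (((j.val:ℝ) + 2) * 𝒯) ∩
            Set.Ioc (0:ℝ) (N*𝒯)) ≤
            MeasureTheory.volume (Set.Icc ((j.val:ℝ) * 𝒯) (((j.val:ℝ) + 2) * 𝒯)) :=
          measure_mono Set.inter_subset_left
        rw [Real.volume_Icc, show ((j.val:ℝ) + 2) * 𝒯 - (j.val:ℝ) * 𝒯 = 2 * 𝒯 by ring] at h1
        calc (MeasureTheory.volume (Set.Icc ((j.val:ℝ) * 𝒯) (((j.val:ℝ) + 2) * 𝒯) ∩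
              Set.Ioc (0:ℝ) (N*𝒯))).toReal
            ≤ (ENNReal.ofReal (2*𝒯)).toReal := ENNReal.toReal_mono ENNReal.ofReal_ne_top h1
          _ = 2*𝒯 := ENNReal.toReal_ofReal (by linarith)
      exact mul_le_mul_of_nonneg_right hv (hc j)
    have hsum : ∑ j : Fin N, 2 * 𝒯 * c j = 4 * 𝒯⁻¹ * S0 + 2 * 𝒯 * S1 := by
      rw [hS0def, hS1def, Finset.mul_sum, Finset.mul_sum, ← Finset.sum_add_distrib]
      apply Finset.sum_congr rfl
      intro j _
      rw [hcdef]
      have h𝒯ne : 𝒯 ≠ 0 := ne_of_gt h𝒯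
      field_simp
      ring
    exact le_trans hmono (hGcalc.trans_eq hsum)
  -- square-root estimates
  have h2 : Real.sqrt S1 ≤ Cinv * Hp⁻¹ * Real.sqrt S0 := by
    have hle : S1 ≤ (Cinv * Hp⁻¹)^2 * S0 := by
      rw [hS0def, hS1def, Finset.mul_sum]
      apply Finset.sum_le_sum
      intro j _
      have h := hinv j
      have h1 := hn1_nonneg (μ j)
      nlinarith [norm_nonneg (μ j)]
    calc Real.sqrt S1 ≤ Real.sqrt ((Cinv * Hp⁻¹)^2 * S0) := Real.sqrt_le_sqrt hle
      _ = Cinv * Hp⁻¹ * Real.sqrt S0 := by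
        rw [Real.sqrt_mul (sq_nonneg _), Real.sqrt_sq (by positivity)]
  have h1 : Real.sqrt (∫ t in Set.Ioc (0 : ℝ) (N * 𝒯),
      ((nneg (∑ j : Fin N, hatDeriv 𝒯 ((j.val : ℝ) + 1) t • μ j)) ^ 2 +
        (n1 (∑ j : Fin N, hatFun 𝒯 ((j.val : ℝ) + 1) t • μ j)) ^ 2)) ≤
      2 * (Real.sqrt 𝒯)⁻¹ * Real.sqrt S0 + Real.sqrt (2*𝒯) * (Cinv * Hp⁻¹ * Real.sqrt S0) := by
    have e1 : (4 : ℝ) * 𝒯⁻¹ = (2*(Real.sqrt 𝒯)⁻¹)^2 := by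
      rw [mul_pow, inv_pow, Real.sq_sqrt h𝒯.le]
      norm_num
    have e2 : (2 : ℝ) * 𝒯 = (Real.sqrt (2*𝒯))^2 := (Real.sq_sqrt (by linarith)).symm
    calc Real.sqrt (∫ t in Set.Ioc (0 : ℝ) (N * 𝒯),
        ((nneg (∑ j : Fin N, hatDeriv 𝒯 ((j.val : ℝ) + 1) t • μ j)) ^ 2 +
          (n1 (∑ j : Fin N, hatFun 𝒯 ((j.val : ℝ) + 1) t • μ j)) ^ 2))
        ≤ Real.sqrt (4 * 𝒯⁻¹ * S0 + 2 * 𝒯 * S1) := Real.sqrt_le_sqrt hI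
      _ ≤ Real.sqrt (4 * 𝒯⁻¹ * S0) + Real.sqrt (2 * 𝒯 * S1) :=
          my_sqrt_add_le _ _ (by positivity) (by positivity)
      _ = 2 * (Real.sqrt 𝒯)⁻¹ * Real.sqrt S0 + Real.sqrt (2*𝒯) * Real.sqrt S1 := by
          rw [e1, e2, Real.sqrt_mul (sq_nonneg _), Real.sqrt_mul (sq_nonneg _),
            Real.sqrt_sq (by positivity), Real.sqrt_sq (by positivity)]
      _ ≤ 2 * (Real.sqrt 𝒯)⁻¹ * Real.sqrt S0 + Real.sqrt (2*𝒯) * (Cinv * Hp⁻¹ * Real.sqrt S0) := by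
          apply add_le_add le_rfl
          exact mul_le_mul_of_nonneg_left h2 (Real.sqrt_nonneg _)
  calc Real.sqrt (∫ t in Set.Ioc (0 : ℝ) (N * 𝒯),
      ((nneg (∑ j : Fin N, hatDeriv 𝒯 ((j.val : ℝ) + 1) t • μ j)) ^ 2 +
        (n1 (∑ j : Fin N, hatFun 𝒯 ((j.val : ℝ) + 1) t • μ j)) ^ 2)) * Real.sqrt S1
      ≤ (2 * (Real.sqrt 𝒯)⁻¹ * Real.sqrt S0 + Real.sqrt (2*𝒯) * (Cinv * Hp⁻¹ * Real.sqrt S0)) *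
        (Cinv * Hp⁻¹ * Real.sqrt S0) :=
        mul_le_mul h1 h2 (Real.sqrt_nonneg _) (by positivity)
    _ = (Real.sqrt (2 * 𝒯) * Cinv ^ 2 * (Hp ^ 2)⁻¹ +
        2 * (Real.sqrt 𝒯)⁻¹ * Cinv * Hp⁻¹) * S0 := by
        have ha : Real.sqrt S0 * Real.sqrt S0 = S0 := Real.mul_self_sqrt hS0
        set a := Real.sqrt S0
        rw [← ha]
        ring
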